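/- Let μ be a finite positive Borel measure on ℂ with μ({z ∈ ℂ : |z| > 1}) = 0, and suppose that the function z ↦ (1 − |z|²)^{−1} is μ-integrable. Then the sequence of monomials (e_k)_{k∈ℕ} is a Bessel sequence in L²(μ) with Bessel bound ∫ (1 − |z|²)^{−1} dμ(z). -/

import Mathlib

open MeasureTheory

/-- The monomials `(z^k)_{k∈ℕ}` form a Bessel sequence in `L²(μ)` with bound `C`:
`∑_k |⟨g, e_k⟩_{L²(μ)}|² ≤ C‖g‖²_{L²(μ)}` for every `g ∈ L²(μ)`
(stated via finite partial sums). -/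
def MonomialsBesselWith (μ : Measure ℂ) (C : ℝ) : Prop :=
  ∀ g : ℂ → ℂ, MemLp g 2 μ → ∀ F : Finset ℕ,
    ∑ k ∈ F, ‖∫ z, g z * (starRingEnd ℂ) (z ^ k) ∂μ‖ ^ 2 ≤ C * ∫ z, ‖g z‖ ^ 2 ∂μ

theorem stmt_15 (μ : Measure ℂ) [IsFiniteMeasure μ]
    (hμ : μ {z : ℂ | 1 < ‖z‖} = 0)
    (hint : ∫⁻ z, (ENNReal.ofReal (1 - ‖z‖ ^ 2))⁻¹ ∂μ < ⊤) :
    MonomialsBesselWith μ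
      (∫⁻ z, (ENNReal.ofReal (1 - ‖z‖ ^ 2))⁻¹ ∂μ).toReal := by
  intro g hg F
  set C' : ENNReal := ∫⁻ z, (ENNReal.ofReal (1 - ‖z‖ ^ 2))⁻¹ ∂μ with hC'
  -- a.e. |z| < 1
  have hma : Measurable fun z : ℂ => ‖z‖ := continuous_norm.measurable
  have hmeas : Measurable fun z : ℂ => (ENNReal.ofReal (1 - ‖z‖ ^ 2))⁻¹ :=
    ((measurable_const.sub (hma.pow_const 2)).ennreal_ofReal).inv
  have hae : ∀ᵐ z ∂μ, ‖z‖ < 1 := by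
    filter_upwards [ae_lt_top hmeas hint.ne] with z hz
    have h0 : (0 : ENNReal) < ENNReal.ofReal (1 - ‖z‖ ^ 2) :=
      ENNReal.inv_lt_top.mp hz
    have h1 : 0 < 1 - ‖z‖ ^ 2 := ENNReal.ofReal_pos.mp h0
    nlinarith [norm_nonneg z]
  -- abbreviations
  set A : ℝ := ∫ z, ‖g z‖ ^ 2 ∂μ with hA
  have hA0 : 0 ≤ A := integral_nonneg fun z => by positivity
  have hsq : ∀ x : ℝ, 0 ≤ x → (x ^ (1 / 2 : ℝ)) ^ 2 = x := fun x hx => by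
    rw [← Real.rpow_natCast (x ^ (1 / 2 : ℝ)) 2, ← Real.rpow_mul hx]
    norm_num
  -- per-term Cauchy-Schwarz
  have hterm : ∀ k : ℕ, ‖∫ z, g z * (starRingEnd ℂ) (z ^ k) ∂μ‖ ^ 2 ≤
      A * ∫ z, ‖z‖ ^ (2 * k) ∂μ := by
    intro k
    set B : ℝ := ∫ z, ‖z‖ ^ (2 * k) ∂μ with hB
    have hB0 : 0 ≤ B := integral_nonneg fun z => by positivity
    have hmk : MemLp (fun z : ℂ => z ^ k) 2 μ := by
      refine MemLp.of_bound (by fun_prop) 1 ?_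
      filter_upwards [hae] with z hz
      calc ‖z ^ k‖ = ‖z‖ ^ k := by
            rw [norm_pow]
        _ ≤ 1 ^ k := pow_le_pow_left₀ (norm_nonneg z) hz.le k
        _ = 1 := one_pow k
    have h2 : (ENNReal.ofReal (2 : ℝ)) = 2 := by norm_num
    have hconj : Real.HolderConjugate 2 2 := Real.HolderConjugate.two_two
    have hcs := integral_mul_norm_le_Lp_mul_Lq (f := g) (g := fun z : ℂ => z ^ k)
      (μ := μ) hconj
      (by rw [h2]; exact hg) (by rw [h2]; exact hmk)
    have hEq1 : ∫ z, ‖g z‖ ^ (2 : ℝ) ∂μ = A := by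
      simp_rw [Real.rpow_two]
      exact hA.symm
    have hEq2 : ∫ z, ‖(fun z : ℂ => z ^ k) z‖ ^ (2 : ℝ) ∂μ = B := by
      simp only [hB]
      refine integral_congr_ae (Filter.Eventually.of_forall fun z => ?_)
      show ‖z ^ k‖ ^ (2 : ℝ) = ‖z‖ ^ (2 * k)
      rw [Real.rpow_two, norm_pow, ← pow_mul, mul_comm k 2]
    rw [hEq1, hEq2] at hcs
    have hI : ‖∫ z, g z * (starRingEnd ℂ) (z ^ k) ∂μ‖ ≤
        ∫ z, ‖g z‖ * ‖(fun z : ℂ => z ^ k) z‖ ∂μ := by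
      refine (norm_integral_le_integral_norm _).trans_eq ?_
      refine integral_congr_ae (Filter.Eventually.of_forall fun z => ?_)
      simp [norm_mul]
    have key : ‖∫ z, g z * (starRingEnd ℂ) (z ^ k) ∂μ‖ ≤
        A ^ (1 / 2 : ℝ) * B ^ (1 / 2 : ℝ) := hI.trans hcs
    calc ‖∫ z, g z * (starRingEnd ℂ) (z ^ k) ∂μ‖ ^ 2
        ≤ (A ^ (1 / 2 : ℝ) * B ^ (1 / 2 : ℝ)) ^ 2 :=
          pow_le_pow_left₀ (norm_nonneg _) key 2
      _ = A * B := by rw [mul_pow, hsq A hA0, hsq B hB0]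
  -- sum of the geometric moments is bounded by C'
  have hmoment : ∑ k ∈ F, ∫ z, ‖z‖ ^ (2 * k) ∂μ ≤ C'.toReal := by
    have hLeq : ∀ k : ℕ, ∫ z, ‖z‖ ^ (2 * k) ∂μ =
        (∫⁻ z, ENNReal.ofReal (‖z‖ ^ (2 * k)) ∂μ).toReal := by
      intro k
      rw [integral_eq_lintegral_of_nonneg_ae
        (Filter.Eventually.of_forall fun z => by positivity)
        (hma.pow_const (2 * k)).aestronglyMeasurable]
    have hsumL : ∑ k ∈ F, ∫⁻ z, ENNReal.ofReal (‖z‖ ^ (2 * k)) ∂μ ≤ C' := by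
      rw [← lintegral_finset_sum _ (fun k _ => (hma.pow_const (2 * k)).ennreal_ofReal)]
      refine lintegral_mono_ae ?_
      filter_upwards [hae] with z hz
      have hz0 : 0 ≤ ‖z‖ := norm_nonneg z
      have h1 : 0 < 1 - ‖z‖ ^ 2 := by nlinarith
      have hreal : ∑ k ∈ F, ‖z‖ ^ (2 * k) ≤ (1 - ‖z‖ ^ 2)⁻¹ := by
        have hs : Summable (fun k : ℕ => (‖z‖ ^ 2) ^ k) :=
          summable_geometric_of_lt_one (by positivity) (by nlinarith)
        have hle := Summable.sum_le_tsum F (fun k _ => by positivity) hs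
        rw [tsum_geometric_of_lt_one (by positivity) (by nlinarith)] at hle
        refine le_trans (le_of_eq ?_) hle
        exact Finset.sum_congr rfl fun k _ => by rw [pow_mul]
      calc ∑ k ∈ F, ENNReal.ofReal (‖z‖ ^ (2 * k))
          = ENNReal.ofReal (∑ k ∈ F, ‖z‖ ^ (2 * k)) :=
            (ENNReal.ofReal_sum_of_nonneg fun k _ => by positivity).symm
        _ ≤ ENNReal.ofReal ((1 - ‖z‖ ^ 2)⁻¹) := ENNReal.ofReal_le_ofReal hreal
        _ = (ENNReal.ofReal (1 - ‖z‖ ^ 2))⁻¹ := ENNReal.ofReal_inv_of_pos h1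
    have hne : ∀ k ∈ F, (∫⁻ z, ENNReal.ofReal (‖z‖ ^ (2 * k)) ∂μ) ≠ ⊤ := by
      intro k hk
      refine ne_top_of_le_ne_top hint.ne (le_trans ?_ hsumL)
      exact Finset.single_le_sum
        (f := fun k => ∫⁻ z, ENNReal.ofReal (‖z‖ ^ (2 * k)) ∂μ)
        (fun k _ => zero_le) hk
    calc ∑ k ∈ F, ∫ z, ‖z‖ ^ (2 * k) ∂μ
        = (∑ k ∈ F, ∫⁻ z, ENNReal.ofReal (‖z‖ ^ (2 * k)) ∂μ).toReal := by
          rw [ENNReal.toReal_sum hne]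
          exact Finset.sum_congr rfl fun k _ => hLeq k
      _ ≤ C'.toReal := ENNReal.toReal_mono hint.ne hsumL
  calc ∑ k ∈ F, ‖∫ z, g z * (starRingEnd ℂ) (z ^ k) ∂μ‖ ^ 2
      ≤ ∑ k ∈ F, A * ∫ z, ‖z‖ ^ (2 * k) ∂μ :=
        Finset.sum_le_sum fun k _ => hterm k
    _ = A * ∑ k ∈ F, ∫ z, ‖z‖ ^ (2 * k) ∂μ := by rw [Finset.mul_sum]
    _ ≤ A * C'.toReal := mul_le_mul_of_nonneg_left hmoment hA0
    _ = C'.toReal * A := mul_comm _ _
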